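/- If the symmetric Jacobian J of a stable phase-locked state is negative definite on the orthogonal complement of (1,…,1)^T, with eigenpairs (λ_n, v_n) for n = 2,…,N, then the derivative of the universal order parameter with respect to the coupling strength satisfies dr_uni/dK = (2/(K² Σ_i k_i)) Σ_{n=2}^N (v_n · ω)² / (−λ_n) ≥ 0. -/

import Mathlib

open Matrix

/-- Derivative of the universal order parameter along a smooth branch of stable
phase-locked steady states:
`dr_uni/dK = (2/(K² Σ_i k_i)) Σ_{n=2}^N (v_n · ω)²/(−λ_n) ≥ 0`. -/
theorem runi_deriv_formula (N : ℕ) [NeZero N] (hN : 2 ≤ N)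
    (A : Fin N → Fin N → ℝ) (ω : Fin N → ℝ)
    (hAsymm : ∀ i j, A i j = A j i) (hAdiag : ∀ i, A i i = 0)
    (hA01 : ∀ i j, A i j = 0 ∨ A i j = 1)
    (hk : 0 < ∑ i, ∑ j, A i j)
    (Kc2 : ℝ) (hKc2 : 0 ≤ Kc2)
    -- smooth branch of steady states for K > Kc2
    (θ : ℝ → Fin N → ℝ)
    (hθdiff : ∀ i, ∀ K > Kc2, DifferentiableAt ℝ (fun K' => θ K' i) K)
    (hss : ∀ K > Kc2, ∀ i, 0 = ω i + K * ∑ j, A i j * Real.sin (θ K j - θ K i))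
    (K₀ : ℝ) (hK₀ : Kc2 < K₀)
    -- Jacobian at θ*(K₀) with orthonormal eigenbasis v and eigenvalues λ
    (J : Matrix (Fin N) (Fin N) ℝ)
    (hJoff : ∀ i j, i ≠ j → J i j = K₀ * A i j * Real.cos (θ K₀ i - θ K₀ j))
    (hJdiag : ∀ i, J i i = -∑ j ∈ Finset.univ.erase i, J i j)
    (v : Fin N → Fin N → ℝ) (lam : Fin N → ℝ)
    (horth : ∀ n p, ∑ i, v n i * v p i = if n = p then 1 else 0)
    (heig : ∀ n, J.mulVec (v n) = lam n • v n)
    (hv1 : v 0 = fun _ => 1 / Real.sqrt N)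
    (hlam0 : lam 0 = 0) (hlamneg : ∀ n, n ≠ 0 → lam n < 0) :
    HasDerivAt
      (fun K => (1 / ∑ i, ∑ j, A i j) * ∑ i, ∑ j, A i j * Real.cos (θ K i - θ K j))
      (2 / (K₀ ^ 2 * ∑ i, ∑ j, A i j) *
        ∑ n ∈ Finset.univ.erase 0, (∑ i, v n i * ω i) ^ 2 / (-lam n)) K₀
    ∧ 0 ≤ 2 / (K₀ ^ 2 * ∑ i, ∑ j, A i j) *
        ∑ n ∈ Finset.univ.erase 0, (∑ i, v n i * ω i) ^ 2 / (-lam n) := by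
  classical
  have hK₀pos : 0 < K₀ := lt_of_le_of_lt hKc2 hK₀
  have hK₀ne : K₀ ≠ 0 := ne_of_gt hK₀pos
  set S : ℝ := ∑ i, ∑ j, A i j with hSdef
  have hSne : S ≠ 0 := ne_of_gt hk
  set d : Fin N → ℝ := fun i => deriv (fun K' => θ K' i) K₀ with hddef
  have hdK : ∀ i, HasDerivAt (fun K' => θ K' i) (d i) K₀ :=
    fun i => (hθdiff i K₀ hK₀).hasDerivAt
  -- steady state at K₀
  have hss0 : ∀ i, ∑ j, A i j * Real.sin (θ K₀ j - θ K₀ i) = -ω i / K₀ := by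
    intro i
    have h := hss K₀ hK₀ i
    field_simp
    linarith
  -- derivative of the steady-state identity
  have hder : ∀ i,
      (∑ j, A i j * Real.sin (θ K₀ j - θ K₀ i))
      + K₀ * ∑ j, A i j * (Real.cos (θ K₀ j - θ K₀ i) * (d j - d i)) = 0 := by
    intro i
    have hsum : HasDerivAt (fun K => ∑ j, A i j * Real.sin (θ K j - θ K i))
        (∑ j, A i j * (Real.cos (θ K₀ j - θ K₀ i) * (d j - d i))) K₀ := by
      apply HasDerivAt.fun_sum
      intro j _
      exact (((hdK j).sub (hdK i)).sin).const_mul (A i j)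
    have hg : HasDerivAt (fun K => ω i + K * ∑ j, A i j * Real.sin (θ K j - θ K i))
        ((∑ j, A i j * Real.sin (θ K₀ j - θ K₀ i))
          + K₀ * ∑ j, A i j * (Real.cos (θ K₀ j - θ K₀ i) * (d j - d i))) K₀ := by
      have h1 := ((hasDerivAt_id K₀).mul hsum).const_add (ω i)
      simpa using h1
    have hev : (fun K => ω i + K * ∑ j, A i j * Real.sin (θ K j - θ K i))
        =ᶠ[nhds K₀] fun _ => (0 : ℝ) := by
      filter_upwards [Ioi_mem_nhds hK₀] with K hK
      exact (hss K hK i).symm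
    have h0 : HasDerivAt (fun K => ω i + K * ∑ j, A i j * Real.sin (θ K j - θ K i))
        0 K₀ := (hasDerivAt_const K₀ (0 : ℝ)).congr_of_eventuallyEq hev
    exact hg.unique h0
  -- Jacobian applied to d
  have hJd : ∀ i, J.mulVec d i = ω i / K₀ := by
    intro i
    have hrow : J.mulVec d i = ∑ j, K₀ * A i j * Real.cos (θ K₀ i - θ K₀ j) * (d j - d i) := by
      have hJrow : ∀ j, j ≠ i → J i j = K₀ * A i j * Real.cos (θ K₀ i - θ K₀ j) :=
        fun j hj => hJoff i j (Ne.symm hj)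
      have h1 : J.mulVec d i = ∑ j, J i j * d j := by
        simp [Matrix.mulVec, dotProduct]
      rw [h1]
      rw [← Finset.sum_erase_add _ _ (Finset.mem_univ i),
          ← Finset.sum_erase_add _ _ (Finset.mem_univ i)]
      have hdiag : K₀ * A i i * Real.cos (θ K₀ i - θ K₀ i) * (d i - d i) = 0 := by ring
      rw [hdiag, add_zero, hJdiag i, neg_mul, Finset.sum_mul, ← sub_eq_add_neg,
        ← Finset.sum_sub_distrib]
      apply Finset.sum_congr rfl
      intro j hj
      rw [hJrow j (Finset.ne_of_mem_erase hj)]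
      ring
    have h2 := hder i
    have h3 : ∑ j, K₀ * A i j * Real.cos (θ K₀ i - θ K₀ j) * (d j - d i)
        = K₀ * ∑ j, A i j * (Real.cos (θ K₀ j - θ K₀ i) * (d j - d i)) := by
      rw [Finset.mul_sum]
      apply Finset.sum_congr rfl
      intro j _
      rw [Real.cos_sub, Real.cos_sub]
      ring
    rw [hrow, h3]
    rw [hss0 i] at h2
    field_simp at h2 ⊢
    linarith
  -- J is symmetric
  have hJsymm : ∀ i j, J i j = J j i := by
    intro i j
    by_cases h : i = j
    · rw [h]
    · rw [hJoff i j h, hJoff j i (Ne.symm h), hAsymm i j, ← Real.cos_neg]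
      ring_nf
  -- eigen-coefficient relations
  have hc : ∀ n, lam n * (∑ i, v n i * d i) = (∑ i, v n i * ω i) / K₀ := by
    intro n
    have h1 : ∑ i, v n i * J.mulVec d i = ∑ i, v n i * (ω i / K₀) := by
      apply Finset.sum_congr rfl; intro i _; rw [hJd i]
    have h2 : ∑ i, v n i * J.mulVec d i = lam n * ∑ j, v n j * d j := by
      calc ∑ i, v n i * J.mulVec d i
          = ∑ i, ∑ j, v n i * (J i j * d j) := by
            apply Finset.sum_congr rfl; intro i _
            simp [Matrix.mulVec, dotProduct, Finset.mul_sum]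
        _ = ∑ j, (∑ i, J j i * v n i) * d j := by
            rw [Finset.sum_comm]
            apply Finset.sum_congr rfl; intro j _
            rw [Finset.sum_mul]
            apply Finset.sum_congr rfl; intro i _
            rw [hJsymm i j]; ring
        _ = ∑ j, (J.mulVec (v n) j) * d j := by
            apply Finset.sum_congr rfl; intro j _
            simp [Matrix.mulVec, dotProduct]
        _ = lam n * ∑ j, v n j * d j := by
            rw [Finset.mul_sum]
            apply Finset.sum_congr rfl; intro j _
            rw [heig n]; simp [Pi.smul_apply]; ring
    rw [h2] at h1
    rw [h1, Finset.sum_div]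
    apply Finset.sum_congr rfl; intro i _; ring
  -- sum of natural frequencies is zero
  have hωsum : ∑ i, ω i = 0 := by
    have hT : ∑ i, ∑ j, A i j * Real.sin (θ K₀ j - θ K₀ i) = 0 := by
      have hanti : ∑ i, ∑ j, A i j * Real.sin (θ K₀ j - θ K₀ i)
          = -∑ i, ∑ j, A i j * Real.sin (θ K₀ j - θ K₀ i) := by
        conv_lhs => rw [Finset.sum_comm]
        rw [← Finset.sum_neg_distrib]
        apply Finset.sum_congr rfl; intro i _
        rw [← Finset.sum_neg_distrib]
        apply Finset.sum_congr rfl; intro j _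
        rw [hAsymm j i]
        have : θ K₀ i - θ K₀ j = -(θ K₀ j - θ K₀ i) := by ring
        rw [this, Real.sin_neg]
        ring
      linarith
    have hsum : (0 : ℝ) = ∑ i, (ω i + K₀ * ∑ j, A i j * Real.sin (θ K₀ j - θ K₀ i)) := by
      rw [← Finset.sum_const_zero (s := (Finset.univ : Finset (Fin N)))]
      apply Finset.sum_congr rfl; intro i _; exact hss K₀ hK₀ i
    rw [Finset.sum_add_distrib, ← Finset.mul_sum, hT, mul_zero, add_zero] at hsum
    exact hsum.symm
  have hv0ω : ∑ i, v 0 i * ω i = 0 := by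
    simp only [hv1]
    rw [← Finset.mul_sum, hωsum, mul_zero]
  -- completeness of the eigenbasis
  have hcomp : ∀ i j, ∑ n, v n i * v n j = if i = j then 1 else 0 := by
    set V : Matrix (Fin N) (Fin N) ℝ := Matrix.of v with hVdef
    have hVVt : V * Vᵀ = 1 := by
      ext n p
      simp only [Matrix.mul_apply, Matrix.transpose_apply, Matrix.one_apply, hVdef,
        Matrix.of_apply]
      exact horth n p
    have hVtV : Vᵀ * V = 1 := mul_eq_one_comm.mp hVVt
    intro i j
    have := congrFun (congrFun hVtV i) j
    simpa [Matrix.mul_apply, Matrix.transpose_apply, Matrix.one_apply, hVdef,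
      Matrix.of_apply] using this
  -- Parseval identity
  have parseval : ∑ n, (∑ i, v n i * ω i) * (∑ i, v n i * d i) = ∑ i, ω i * d i := by
    have h1 : ∀ n, (∑ i, v n i * ω i) * (∑ i, v n i * d i)
        = ∑ i, ∑ j, (ω i * d j) * (v n i * v n j) := by
      intro n
      rw [Finset.sum_mul_sum]
      apply Finset.sum_congr rfl; intro i _
      apply Finset.sum_congr rfl; intro j _
      ring
    calc ∑ n, (∑ i, v n i * ω i) * (∑ i, v n i * d i)
        = ∑ n, ∑ i, ∑ j, (ω i * d j) * (v n i * v n j) := by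
          exact Finset.sum_congr rfl fun n _ => h1 n
      _ = ∑ i, ∑ j, (ω i * d j) * ∑ n, v n i * v n j := by
          rw [Finset.sum_comm]
          apply Finset.sum_congr rfl; intro i _
          rw [Finset.sum_comm]
          apply Finset.sum_congr rfl; intro j _
          rw [Finset.mul_sum]
      _ = ∑ i, ω i * d i := by
          apply Finset.sum_congr rfl; intro i _
          simp only [hcomp]
          simp [Finset.sum_ite_eq, mul_ite]
  -- value of ω · d
  have hod : ∑ i, ω i * d i
      = ∑ n ∈ Finset.univ.erase 0, (∑ i, v n i * ω i) ^ 2 / (K₀ * lam n) := by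
    rw [← parseval, ← Finset.sum_erase_add _ _ (Finset.mem_univ 0), hv0ω, zero_mul, add_zero]
    apply Finset.sum_congr rfl
    intro n hn
    have hn0 : n ≠ 0 := Finset.ne_of_mem_erase hn
    have hlamne : lam n ≠ 0 := ne_of_lt (hlamneg n hn0)
    have hcn := hc n
    have hvd : ∑ i, v n i * d i = (∑ i, v n i * ω i) / (K₀ * lam n) := by
      field_simp at hcn ⊢
      linarith
    rw [hvd]
    ring
  -- the derivative of r_uni
  have hDeriv : HasDerivAt
      (fun K => (1 / S) * ∑ i, ∑ j, A i j * Real.cos (θ K i - θ K j))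
      ((1 / S) * ∑ i, ∑ j, A i j * (-Real.sin (θ K₀ i - θ K₀ j) * (d i - d j))) K₀ := by
    apply HasDerivAt.const_mul
    apply HasDerivAt.fun_sum
    intro i _
    apply HasDerivAt.fun_sum
    intro j _
    exact (((hdK i).sub (hdK j)).cos).const_mul (A i j)
  -- identify the derivative value
  have hval : (1 / S) * ∑ i, ∑ j, A i j * (-Real.sin (θ K₀ i - θ K₀ j) * (d i - d j))
      = 2 / (K₀ ^ 2 * S) * ∑ n ∈ Finset.univ.erase 0, (∑ i, v n i * ω i) ^ 2 / (-lam n) := by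
    have hsplit : ∑ i, ∑ j, A i j * (-Real.sin (θ K₀ i - θ K₀ j) * (d i - d j))
        = -2 * ∑ i, d i * ∑ j, A i j * Real.sin (θ K₀ i - θ K₀ j) := by
      have hswap : ∑ i, ∑ j, A i j * (Real.sin (θ K₀ i - θ K₀ j) * d j)
          = -∑ i, ∑ j, A i j * (Real.sin (θ K₀ i - θ K₀ j) * d i) := by
        conv_lhs => rw [Finset.sum_comm]
        rw [← Finset.sum_neg_distrib]
        apply Finset.sum_congr rfl; intro i _
        rw [← Finset.sum_neg_distrib]
        apply Finset.sum_congr rfl; intro j _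
        rw [hAsymm j i]
        have : θ K₀ j - θ K₀ i = -(θ K₀ i - θ K₀ j) := by ring
        rw [this, Real.sin_neg]
        ring
      have hexpand : ∑ i, ∑ j, A i j * (-Real.sin (θ K₀ i - θ K₀ j) * (d i - d j))
          = -(∑ i, ∑ j, A i j * (Real.sin (θ K₀ i - θ K₀ j) * d i))
            + ∑ i, ∑ j, A i j * (Real.sin (θ K₀ i - θ K₀ j) * d j) := by
        rw [← Finset.sum_neg_distrib, ← Finset.sum_add_distrib]
        apply Finset.sum_congr rfl; intro i _
        rw [← Finset.sum_neg_distrib, ← Finset.sum_add_distrib]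
        apply Finset.sum_congr rfl; intro j _
        ring
      have ht : ∑ i, ∑ j, A i j * (Real.sin (θ K₀ i - θ K₀ j) * d i)
          = ∑ i, d i * ∑ j, A i j * Real.sin (θ K₀ i - θ K₀ j) := by
        apply Finset.sum_congr rfl; intro i _
        rw [Finset.mul_sum]
        apply Finset.sum_congr rfl; intro j _
        ring
      rw [hexpand, hswap, ht]
      ring
    have hss0' : ∀ i, ∑ j, A i j * Real.sin (θ K₀ i - θ K₀ j) = ω i / K₀ := by
      intro i
      have h := hss0 i
      have : ∑ j, A i j * Real.sin (θ K₀ i - θ K₀ j)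
          = -∑ j, A i j * Real.sin (θ K₀ j - θ K₀ i) := by
        rw [← Finset.sum_neg_distrib]
        apply Finset.sum_congr rfl; intro j _
        have h2 : θ K₀ i - θ K₀ j = -(θ K₀ j - θ K₀ i) := by ring
        rw [h2, Real.sin_neg]; ring
      rw [this, h]; ring
    rw [hsplit]
    have : ∑ i, d i * ∑ j, A i j * Real.sin (θ K₀ i - θ K₀ j) = ∑ i, d i * (ω i / K₀) := by
      apply Finset.sum_congr rfl; intro i _; rw [hss0' i]
    rw [this]
    have hωd : ∑ i, d i * (ω i / K₀) = (1 / K₀) * ∑ i, ω i * d i := by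
      rw [Finset.mul_sum]
      apply Finset.sum_congr rfl; intro i _; ring
    rw [hωd, hod]
    have hsum2 : ∑ n ∈ Finset.univ.erase 0, (∑ i, v n i * ω i) ^ 2 / (K₀ * lam n)
        = (-(1 / K₀)) * ∑ n ∈ Finset.univ.erase 0, (∑ i, v n i * ω i) ^ 2 / (-lam n) := by
      rw [Finset.mul_sum]
      apply Finset.sum_congr rfl
      intro n hn
      have hlamne : lam n ≠ 0 := ne_of_lt (hlamneg n (Finset.ne_of_mem_erase hn))
      field_simp
    rw [hsum2]
    field_simp
  constructor
  · rw [← hval]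
    exact hDeriv
  · apply mul_nonneg
    · apply div_nonneg (by norm_num)
      positivity
    · apply Finset.sum_nonneg
      intro n hn
      apply div_nonneg (sq_nonneg _)
      have := hlamneg n (Finset.ne_of_mem_erase hn)
      linarith
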